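/- arXiv:1402.7349 — 3 statements merged into one kernel-verified Lean document; each statement's English description precedes it below -/
import Mathlib

section
/- Fix ρ > 0 and symmetric matrices Θ̃, W₁, S with S the empirical covariance matrix. The unique minimizer over positive definite symmetric Θ of −log det Θ + trace(SΘ) + (ρ/2)‖Θ − Θ̃ + W₁‖_F² is Θ* = (1/2) U (D + √(D² + (4/ρ)I)) Uᵀ, where U D Uᵀ is the eigendecomposition of Θ̃ − W₁ − (1/ρ)S. -/
open Matrix BigOperators

/-- The squared Frobenius norm of a matrix. -/
def frobSq {p : ℕ} (A : Matrix (Fin p) (Fin p) ℝ) : ℝ := ∑ i, ∑ j, (A i j) ^ 2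

namespace HGLaux
variable {p : ℕ}

/-- Frobenius inner product. -/
def ip {p : ℕ} (A B : Matrix (Fin p) (Fin p) ℝ) : ℝ := ∑ i, ∑ j, A i j * B i j

lemma frobSq_nonneg (A : Matrix (Fin p) (Fin p) ℝ) : 0 ≤ frobSq A :=
  Finset.sum_nonneg fun i _ => Finset.sum_nonneg fun j _ => sq_nonneg _

lemma frobSq_pos {A : Matrix (Fin p) (Fin p) ℝ} (hA : A ≠ 0) : 0 < frobSq A := by
  obtain ⟨i, j, hij⟩ : ∃ i j, A i j ≠ 0 := by
    by_contra h
    push_neg at h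
    exact hA (by ext i j; simp [h])
  refine Finset.sum_pos' (fun i _ => Finset.sum_nonneg fun j _ => sq_nonneg _) ⟨i, Finset.mem_univ i, ?_⟩
  exact Finset.sum_pos' (fun j _ => sq_nonneg _) ⟨j, Finset.mem_univ j, by positivity⟩

lemma frobSq_add (X Y : Matrix (Fin p) (Fin p) ℝ) :
    frobSq (X + Y) = frobSq X + 2 * ip X Y + frobSq Y := by
  simp only [frobSq, ip, Matrix.add_apply, Finset.mul_sum, ← Finset.sum_add_distrib]
  exact Finset.sum_congr rfl fun i _ => Finset.sum_congr rfl fun j _ => by ring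

lemma ip_smul_right (a : ℝ) (X Y : Matrix (Fin p) (Fin p) ℝ) :
    ip X (a • Y) = a * ip X Y := by
  simp only [ip, Matrix.smul_apply, smul_eq_mul, Finset.mul_sum]
  exact Finset.sum_congr rfl fun i _ => Finset.sum_congr rfl fun j _ => by ring

lemma ip_sub_right (X Y Z : Matrix (Fin p) (Fin p) ℝ) :
    ip X (Y - Z) = ip X Y - ip X Z := by
  simp only [ip, Matrix.sub_apply, mul_sub, Finset.sum_sub_distrib]

lemma ip_eq_trace (X Y : Matrix (Fin p) (Fin p) ℝ) :
    ip X Y = (Xᵀ * Y).trace := by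
  simp only [ip, Matrix.trace, Matrix.diag, Matrix.mul_apply, Matrix.transpose_apply]
  exact Finset.sum_comm

/-- Trace of a hermitian real matrix equals the sum of its eigenvalues. -/
lemma trace_eq_sum_eigenvalues {M : Matrix (Fin p) (Fin p) ℝ} (hM : M.IsHermitian) :
    M.trace = ∑ i, hM.eigenvalues i := by
  simpa using hM.trace_eq_sum_eigenvalues

/-- `log det M ≤ trace M - p` for positive definite `M`. -/
lemma log_det_le_trace {M : Matrix (Fin p) (Fin p) ℝ} (hM : M.PosDef) :
    Real.log M.det ≤ M.trace - p := by
  have he := hM.isHermitian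
  have hev : ∀ i, 0 < he.eigenvalues i := hM.eigenvalues_pos
  have hdet : M.det = ∏ i, he.eigenvalues i := by
    simpa using he.det_eq_prod_eigenvalues
  have htr : M.trace = ∑ i, he.eigenvalues i := trace_eq_sum_eigenvalues he
  rw [hdet, htr, Real.log_prod (fun i _ => (hev i).ne')]
  have : ∀ i : Fin p, Real.log (he.eigenvalues i) ≤ he.eigenvalues i - 1 :=
    fun i => Real.log_le_sub_one_of_pos (hev i)
  calc ∑ i, Real.log (he.eigenvalues i) ≤ ∑ i, (he.eigenvalues i - 1) :=
        Finset.sum_le_sum fun i _ => this i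
    _ = ∑ i, he.eigenvalues i - p := by
        rw [Finset.sum_sub_distrib]; simp

/-- Conjugation preserves positive definiteness (real case). -/
lemma posDef_conj {B M : Matrix (Fin p) (Fin p) ℝ} (hM : M.PosDef)
    (hB : ∀ v : Fin p → ℝ, v ≠ 0 → Bᵀ *ᵥ v ≠ 0) : (B * M * Bᵀ).PosDef := by
  rw [Matrix.posDef_iff_dotProduct_mulVec]
  constructor
  · have hsym : Mᵀ = M := by
      simpa [Matrix.conjTranspose_eq_transpose_of_trivial] using hM.isHermitian.eq
    simp [Matrix.IsHermitian, Matrix.conjTranspose_eq_transpose_of_trivial,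
      Matrix.transpose_mul, hsym, Matrix.mul_assoc]
  · intro v hv
    have h1 : star v ⬝ᵥ ((B * M * Bᵀ) *ᵥ v) = star (Bᵀ *ᵥ v) ⬝ᵥ (M *ᵥ (Bᵀ *ᵥ v)) := by
      simp only [star_trivial]
      rw [← Matrix.mulVec_mulVec, ← Matrix.mulVec_mulVec, Matrix.dotProduct_mulVec (v := v),
        ← Matrix.mulVec_transpose]
    rw [h1]
    exact hM.dotProduct_mulVec_pos (hB v hv)

/-- Key inequality: `log det X ≤ ∑ log xᵢ + ∑ Xᵢᵢ/xᵢ − p`. -/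
lemma log_det_le_diag {X : Matrix (Fin p) (Fin p) ℝ} (hX : X.PosDef)
    {x : Fin p → ℝ} (hx : ∀ i, 0 < x i) :
    Real.log X.det ≤ (∑ i, Real.log (x i)) + (∑ i, (x i)⁻¹ * X i i) - p := by
  set e : Fin p → ℝ := fun i => (Real.sqrt (x i))⁻¹ with he_def
  have he : ∀ i, 0 < e i := fun i =>
    inv_pos.mpr (Real.sqrt_pos.mpr (hx i))
  have hE : (Matrix.diagonal e)ᵀ = Matrix.diagonal e := Matrix.diagonal_transpose e
  have hinj : ∀ v : Fin p → ℝ, v ≠ 0 → (Matrix.diagonal e)ᵀ *ᵥ v ≠ 0 := by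
    intro v hv h0
    apply hv
    funext i
    have := congrFun h0 i
    simp only [hE, Matrix.mulVec_diagonal, Pi.zero_apply] at this
    exact by simpa using (mul_eq_zero.mp this).resolve_left (he i).ne'
  have hY : (Matrix.diagonal e * X * (Matrix.diagonal e)ᵀ).PosDef := posDef_conj hX hinj
  rw [hE] at hY
  have key := log_det_le_trace hY
  have he2 : ∀ i, e i ^ 2 = (x i)⁻¹ := fun i => by
    simp only [he_def]
    rw [← Real.sqrt_inv]
    exact Real.sq_sqrt (le_of_lt (inv_pos.mpr (hx i)))
  -- determinant
  have hdet : (Matrix.diagonal e * X * Matrix.diagonal e).det = (∏ i, (x i)⁻¹) * X.det := by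
    rw [Matrix.det_mul, Matrix.det_mul, Matrix.det_diagonal]
    rw [show (∏ i, e i) * X.det * ∏ i, e i = (∏ i, e i)^2 * X.det by ring]
    rw [← Finset.prod_pow]
    simp_rw [he2]
  -- trace
  have htr : (Matrix.diagonal e * X * Matrix.diagonal e).trace = ∑ i, (x i)⁻¹ * X i i := by
    simp only [Matrix.trace, Matrix.diag, Matrix.mul_diagonal, Matrix.diagonal_mul]
    exact Finset.sum_congr rfl fun i _ => by rw [← he2 i]; ring
  rw [hdet, htr] at key
  have hXdet : 0 < X.det := hX.det_pos
  have hprod : 0 < ∏ i, (x i)⁻¹ := Finset.prod_pos fun i _ => inv_pos.mpr (hx i)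
  rw [Real.log_mul hprod.ne' hXdet.ne',
    Real.log_prod (fun i _ => (inv_pos.mpr (hx i)).ne')] at key
  simp_rw [Real.log_inv] at key
  rw [Finset.sum_neg_distrib] at key
  linarith

end HGLaux

open HGLaux

/-- The Θ-update of the ADMM algorithm for the hub graphical lasso: for `ρ > 0` and
symmetric `Θ̃`, `W₁`, `S`, the unique minimizer over symmetric positive definite `Θ` of
`−log det Θ + trace(SΘ) + (ρ/2)‖Θ − Θ̃ + W₁‖_F²` is
`Θ* = (1/2) U (D + √(D² + (4/ρ)I)) Uᵀ`, where `U D Uᵀ` is the eigendecomposition of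
`Θ̃ − W₁ − (1/ρ)S`. -/
theorem hgl_theta_update {p : ℕ} (ρ : ℝ) (hρ : 0 < ρ)
    (S Θt W1 : Matrix (Fin p) (Fin p) ℝ)
    (hS : S.IsSymm) (hΘt : Θt.IsSymm) (hW1 : W1.IsSymm)
    (U : Matrix (Fin p) (Fin p) ℝ) (d : Fin p → ℝ)
    (hU : U * Uᵀ = 1) (hU' : Uᵀ * U = 1)
    (hdecomp : Θt - W1 - ρ⁻¹ • S = U * Matrix.diagonal d * Uᵀ)
    (Θstar : Matrix (Fin p) (Fin p) ℝ)
    (hΘstar : Θstar =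
      (1 / 2 : ℝ) • (U * Matrix.diagonal (fun i => d i + Real.sqrt ((d i) ^ 2 + 4 / ρ)) * Uᵀ)) :
    Θstar.PosDef ∧
    (∀ Θ : Matrix (Fin p) (Fin p) ℝ, Θ.PosDef →
      -Real.log Θstar.det + (S * Θstar).trace + ρ / 2 * frobSq (Θstar - Θt + W1) ≤
      -Real.log Θ.det + (S * Θ).trace + ρ / 2 * frobSq (Θ - Θt + W1)) ∧
    (∀ Θ : Matrix (Fin p) (Fin p) ℝ, Θ.PosDef → Θ ≠ Θstar →
      -Real.log Θstar.det + (S * Θstar).trace + ρ / 2 * frobSq (Θstar - Θt + W1) <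
      -Real.log Θ.det + (S * Θ).trace + ρ / 2 * frobSq (Θ - Θt + W1)) := by
  -- scalar eigenvalue facts
  set x : Fin p → ℝ := fun i => (d i + Real.sqrt ((d i) ^ 2 + 4 / ρ)) / 2 with hx_def
  have hs : ∀ i, |d i| < Real.sqrt ((d i) ^ 2 + 4 / ρ) := by
    intro i
    rw [← Real.sqrt_sq_eq_abs]
    have h4 : 0 < 4 / ρ := by positivity
    exact Real.sqrt_lt_sqrt (sq_nonneg _) (by linarith)
  have hx : ∀ i, 0 < x i := by
    intro i
    have := hs i
    have := abs_nonneg (d i)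
    have := neg_abs_le (d i)
    simp only [hx_def]
    linarith
  have hxd : ∀ i, ρ * (x i - d i) = (x i)⁻¹ := by
    intro i
    have hsq : (Real.sqrt ((d i) ^ 2 + 4 / ρ)) ^ 2 = (d i) ^ 2 + 4 / ρ :=
      Real.sq_sqrt (by positivity)
    have key : x i * (ρ * (x i - d i)) = 1 := by
      have h1 : x i * (ρ * (x i - d i)) =
          ρ * ((Real.sqrt ((d i) ^ 2 + 4 / ρ)) ^ 2 - (d i) ^ 2) / 4 := by
        simp only [hx_def]; ring
      rw [h1, hsq]
      field_simp
      ring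
    exact eq_inv_of_mul_eq_one_right key
  -- matrix setup
  have hUinj : ∀ v : Fin p → ℝ, v ≠ 0 → Uᵀ *ᵥ v ≠ 0 := by
    intro v hv h0
    apply hv
    have : U *ᵥ (Uᵀ *ᵥ v) = 0 := by rw [h0, Matrix.mulVec_zero]
    rwa [Matrix.mulVec_mulVec, hU, Matrix.one_mulVec] at this
  have hUTinj : ∀ v : Fin p → ℝ, v ≠ 0 → (Uᵀ)ᵀ *ᵥ v ≠ 0 := by
    intro v hv h0
    apply hv
    rw [Matrix.transpose_transpose] at h0
    have : Uᵀ *ᵥ (U *ᵥ v) = 0 := by rw [h0, Matrix.mulVec_zero]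
    rwa [Matrix.mulVec_mulVec, hU', Matrix.one_mulVec] at this
  have hB : Θstar = U * Matrix.diagonal x * Uᵀ := by
    have hxfun : x = (1/2 : ℝ) • fun i => d i + Real.sqrt ((d i) ^ 2 + 4 / ρ) := by
      funext i
      simp only [hx_def, Pi.smul_apply, smul_eq_mul]
      ring
    rw [hΘstar, hxfun, Matrix.diagonal_smul, Matrix.mul_smul, Matrix.smul_mul]
  have hBpd : Θstar.PosDef := by
    rw [hB]
    exact posDef_conj (Matrix.PosDef.diagonal hx) hUinj
  set N : Matrix (Fin p) (Fin p) ℝ :=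
    U * Matrix.diagonal (fun i => (x i)⁻¹) * Uᵀ with hN_def
  have hNsym : Nᵀ = N := by
    simp only [hN_def, Matrix.transpose_mul, Matrix.transpose_transpose,
      Matrix.diagonal_transpose, Matrix.mul_assoc]
  have hgrad : ρ • (Θstar - (Θt - W1 - ρ⁻¹ • S)) = N := by
    rw [hdecomp, hB, ← Matrix.sub_mul, ← Matrix.mul_sub, ← Matrix.smul_mul,
      ← Matrix.mul_smul, hN_def]
    congr 2
    rw [Matrix.diagonal_sub]
    ext i j
    rcases eq_or_ne i j with h | h
    · subst h
      simpa using hxd i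
    · simp [Matrix.diagonal_apply_ne _ h]
  -- symmetry of posdef real matrices
  have hsymm : ∀ {M : Matrix (Fin p) (Fin p) ℝ}, M.PosDef → Mᵀ = M := by
    intro M hM
    have := hM.isHermitian.eq
    rwa [Matrix.conjTranspose_eq_transpose_of_trivial] at this
  -- determinant/trace computations
  have hdetU : U.det * Uᵀ.det = 1 := by rw [← Matrix.det_mul, hU, Matrix.det_one]
  have hcore : ∀ Θ : Matrix (Fin p) (Fin p) ℝ, Θ.PosDef →
      Real.log Θ.det ≤ Real.log Θstar.det + ((N * Θ).trace - (N * Θstar).trace) := by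
    intro Θ hΘ
    set X : Matrix (Fin p) (Fin p) ℝ := Uᵀ * Θ * U with hX_def
    have hXpd : X.PosDef := by
      have := posDef_conj hΘ hUTinj
      rwa [Matrix.transpose_transpose] at this
    have hdetX : X.det = Θ.det := by
      rw [hX_def, Matrix.det_mul, Matrix.det_mul, Matrix.det_transpose]
      have h2 : U.det * U.det = 1 := by rw [Matrix.det_transpose] at hdetU; exact hdetU
      linear_combination Θ.det * h2
    have htrNΘ : (N * Θ).trace = ∑ i, (x i)⁻¹ * X i i := by
      have h1 : N * Θ = U * (Matrix.diagonal (fun i => (x i)⁻¹) * Uᵀ * Θ) := by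
        simp only [hN_def, Matrix.mul_assoc]
      have h2 : Matrix.diagonal (fun i => (x i)⁻¹) * Uᵀ * Θ * U =
          Matrix.diagonal (fun i => (x i)⁻¹) * X := by
        simp only [hX_def, Matrix.mul_assoc]
      rw [h1, Matrix.trace_mul_comm, h2]
      simp [Matrix.trace, Matrix.diag, Matrix.diagonal_mul]
    have htrNB : (N * Θstar).trace = (p : ℝ) := by
      have h1 : N * Θstar = U * Uᵀ := by
        rw [hN_def, hB]
        simp only [Matrix.mul_assoc]
        rw [← Matrix.mul_assoc Uᵀ U, hU', Matrix.one_mul,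
          ← Matrix.mul_assoc (Matrix.diagonal fun i => (x i)⁻¹) (Matrix.diagonal x),
          Matrix.diagonal_mul_diagonal]
        have hone : (fun i => (x i)⁻¹ * x i) = fun _ : Fin p => (1:ℝ) :=
          funext fun i => inv_mul_cancel₀ (hx i).ne'
        rw [hone, Matrix.diagonal_one, Matrix.one_mul]
      rw [h1, hU, Matrix.trace_one]
      simp
    have hdetB : Θstar.det = ∏ i, x i := by
      rw [hB, Matrix.det_mul, Matrix.det_mul, Matrix.det_diagonal]
      linear_combination (∏ i, x i) * hdetU
    have hlogB : Real.log Θstar.det = ∑ i, Real.log (x i) := by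
      rw [hdetB, Real.log_prod fun i _ => (hx i).ne']
    have := log_det_le_diag hXpd hx
    rw [hdetX] at this
    rw [hlogB, htrNΘ, htrNB]
    linarith
  -- the key inequality
  have hkey : ∀ Θ : Matrix (Fin p) (Fin p) ℝ, Θ.PosDef →
      (-Real.log Θstar.det + (S * Θstar).trace + ρ / 2 * frobSq (Θstar - Θt + W1))
        + ρ / 2 * frobSq (Θ - Θstar) ≤
      -Real.log Θ.det + (S * Θ).trace + ρ / 2 * frobSq (Θ - Θt + W1) := by
    intro Θ hΘ
    set M : Matrix (Fin p) (Fin p) ℝ := Θ - Θstar with hM_def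
    set C : Matrix (Fin p) (Fin p) ℝ := Θstar - Θt + W1 with hC_def
    have hsplit : Θ - Θt + W1 = M + C := by rw [hM_def, hC_def]; abel
    have hMsym : Mᵀ = M := by
      rw [hM_def, Matrix.transpose_sub, hsymm hΘ, hsymm hBpd]
    have hrC : ρ • C = N - S := by
      rw [← hgrad, hC_def]
      have : Θstar - Θt + W1 = (Θstar - (Θt - W1 - ρ⁻¹ • S)) - ρ⁻¹ • S := by abel
      rw [this, smul_sub, smul_smul, mul_inv_cancel₀ hρ.ne', one_smul]
    have e1 : ρ * ip M C = ((N * Θ).trace - (N * Θstar).trace)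
        - ((S * Θ).trace - (S * Θstar).trace) := by
      rw [← ip_smul_right, hrC, ip_sub_right, ip_eq_trace, ip_eq_trace, hMsym,
        Matrix.trace_mul_comm M N, Matrix.trace_mul_comm M S, hM_def,
        Matrix.mul_sub, Matrix.mul_sub, Matrix.trace_sub, Matrix.trace_sub]
    have hfr : ρ / 2 * frobSq (Θ - Θt + W1) =
        ρ / 2 * frobSq M + ρ * ip M C + ρ / 2 * frobSq C := by
      rw [hsplit, frobSq_add]; ring
    have hfr2 : ρ / 2 * frobSq (Θstar - Θt + W1) = ρ / 2 * frobSq C := by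
      rw [← hC_def]
    have e2 := hcore Θ hΘ
    linarith [e1, e2, hfr, hfr2]
  refine ⟨hBpd, fun Θ hΘ => ?_, fun Θ hΘ hne => ?_⟩
  · have h1 := hkey Θ hΘ
    have h2 : 0 ≤ ρ / 2 * frobSq (Θ - Θstar) :=
      mul_nonneg (by linarith) (frobSq_nonneg _)
    linarith
  · have h1 := hkey Θ hΘ
    have h2 : 0 < ρ / 2 * frobSq (Θ - Θstar) :=
      mul_pos (by linarith) (frobSq_pos (sub_ne_zero.mpr hne))
    linarith
end

section
/- (Sufficient condition for block-diagonal HGL solution) Let C₁,…,C_K be a partition of {1,…,p}. If min{λ₁, λ₂/2} > |S_{jj'}| for all j ∈ C_k, j' ∈ C_{k'} with k ≠ k', then the solution Θ* of the hub graphical lasso problem minimize over Θ ≻ 0 symmetric of −log det Θ + trace(SΘ) + P(Θ) is block diagonal with blocks given by C₁,…,C_K (after permutation of rows and columns). -/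
open Matrix BigOperators

/-- The off-diagonal part `A - diag(A)` of a square matrix. -/
def offd {p : ℕ} (A : Matrix (Fin p) (Fin p) ℝ) : Matrix (Fin p) (Fin p) ℝ :=
  A - Matrix.diagonal (fun i => A i i)

/-- The hub penalty function. -/
noncomputable def hubPenalty {p : ℕ} (l1 l2 l3 q : ℝ)
    (Θ : Matrix (Fin p) (Fin p) ℝ) : ℝ :=
  sInf {c : ℝ | ∃ V Z : Matrix (Fin p) (Fin p) ℝ, Z.IsSymm ∧ Θ = V + Vᵀ + Z ∧
    c = l1 * (∑ i, ∑ j, |offd Z i j|) + l2 * (∑ i, ∑ j, |offd V i j|) +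
        l3 * ∑ j, (∑ i, |offd V i j| ^ q) ^ (1 / q)}

lemma offd_apply {p : ℕ} (A : Matrix (Fin p) (Fin p) ℝ) (i j : Fin p) :
    offd A i j = if i = j then 0 else A i j := by
  simp only [offd, Matrix.sub_apply, Matrix.diagonal_apply]
  split
  · rename_i h; subst h; ring
  · ring

lemma pen_bddBelow {p : ℕ} (l1 l2 l3 q : ℝ) (h1 : 0 ≤ l1) (h2 : 0 ≤ l2) (h3 : 0 ≤ l3)
    (Θ : Matrix (Fin p) (Fin p) ℝ) :
    BddBelow {c : ℝ | ∃ V Z : Matrix (Fin p) (Fin p) ℝ, Z.IsSymm ∧ Θ = V + Vᵀ + Z ∧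
      c = l1 * (∑ i, ∑ j, |offd Z i j|) + l2 * (∑ i, ∑ j, |offd V i j|) +
          l3 * ∑ j, (∑ i, |offd V i j| ^ q) ^ (1 / q)} := by
  refine ⟨0, ?_⟩
  rintro c ⟨V, Z, -, -, rfl⟩
  have A1 : 0 ≤ ∑ i, ∑ j, |offd Z i j| := by positivity
  have A2 : 0 ≤ ∑ i, ∑ j, |offd V i j| := by positivity
  have A3 : 0 ≤ ∑ j, (∑ i, |offd V i j| ^ q) ^ (1 / q) := by positivity
  have := mul_nonneg h1 A1
  have := mul_nonneg h2 A2
  have := mul_nonneg h3 A3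
  linarith

lemma trace_eq_sum_eigs {n : ℕ} {A : Matrix (Fin n) (Fin n) ℝ} (hA : A.IsHermitian) :
    A.trace = ∑ i, hA.eigenvalues i := by
  simpa using hA.trace_eq_sum_eigenvalues

open scoped MatrixOrder in
lemma logdet_concavity {n : ℕ} {A B : Matrix (Fin n) (Fin n) ℝ} (hA : A.PosDef) (hB : B.PosDef) :
    Real.log B.det ≤ Real.log A.det + (A⁻¹ * B).trace - n := by
  classical
  set R := CFC.sqrt A with hRdef
  have hRH : R.IsHermitian := (CFC.sqrt_nonneg A).posSemidef.isHermitian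
  have hRR : R * R = A := CFC.sqrt_mul_sqrt_self A hA.posSemidef.nonneg
  have hdetA : 0 < A.det := hA.det_pos
  have hdetB : 0 < B.det := hB.det_pos
  have hdetR : R.det ≠ 0 := by
    intro h
    rw [← hRR, Matrix.det_mul, h, mul_zero] at hdetA
    exact lt_irrefl _ hdetA
  set X := R⁻¹ * B * R⁻¹ with hXdef
  have hXsemi : X.PosSemidef := by
    have h := hB.posSemidef.mul_mul_conjTranspose_same (R⁻¹)
    have : (R⁻¹)ᴴ = R⁻¹ := by
      rw [Matrix.conjTranspose_nonsing_inv, hRH.eq]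
    rwa [this] at h
  have hdetX : X.det = B.det / A.det := by
    rw [hXdef, Matrix.det_mul, Matrix.det_mul, Matrix.det_nonsing_inv, ← hRR, Matrix.det_mul]
    rw [Ring.inverse_eq_inv]
    field_simp [Ring.inverse_eq_inv']
  have hXdetpos : 0 < X.det := by rw [hdetX]; positivity
  have htrX : X.trace = (A⁻¹ * B).trace := by
    rw [hXdef, Matrix.trace_mul_cycle, ← Matrix.mul_inv_rev, hRR]
  set μ := hXsemi.1.eigenvalues with hμ
  have hprod : X.det = ∏ i, μ i := by
    rw [hXsemi.1.det_eq_prod_eigenvalues]; simp; rfl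
  have hsum : X.trace = ∑ i, μ i := trace_eq_sum_eigs hXsemi.1
  have hμpos : ∀ i, 0 < μ i := by
    intro i
    rcases lt_or_eq_of_le (hXsemi.eigenvalues_nonneg i) with h | h
    · exact h
    · exfalso
      have : X.det = 0 := by
        rw [hprod]
        exact Finset.prod_eq_zero (Finset.mem_univ i) h.symm
      rw [this] at hXdetpos; exact lt_irrefl _ hXdetpos
  have hlog : Real.log X.det ≤ X.trace - n := by
    rw [hprod, Real.log_prod (fun i _ => (hμpos i).ne'), hsum]
    have : ∀ i ∈ Finset.univ, Real.log (μ i) ≤ μ i - 1 :=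
      fun i _ => Real.log_le_sub_one_of_pos (hμpos i)
    calc ∑ i, Real.log (μ i) ≤ ∑ i : Fin n, (μ i - 1) := Finset.sum_le_sum this
      _ = (∑ i, μ i) - n := by rw [Finset.sum_sub_distrib]; simp
  rw [hdetX, Real.log_div hdetB.ne' hdetA.ne'] at hlog
  rw [htrX] at hlog
  linarith

def blockR {p K : ℕ} (C : Fin p → Fin K) (A : Matrix (Fin p) (Fin p) ℝ) :
    Matrix (Fin p) (Fin p) ℝ :=
  Matrix.of fun i j => if C i = C j then A i j else 0

lemma blockR_quad {p K : ℕ} (C : Fin p → Fin K) (A : Matrix (Fin p) (Fin p) ℝ)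
    (x : Fin p → ℝ) :
    x ⬝ᵥ (blockR C A) *ᵥ x =
      ∑ k, (fun j => if C j = k then x j else 0) ⬝ᵥ A *ᵥ (fun j => if C j = k then x j else 0) := by
  classical
  have key : ∀ (i j : Fin p),
      (∑ k, (if C i = k then x i else 0) * (A i j * if C j = k then x j else 0))
        = if C i = C j then x i * (A i j * x j) else 0 := by
    intro i j
    have h0 : ∀ k, (if C i = k then x i else 0) * (A i j * if C j = k then x j else 0)
        = if C i = k then (x i * (A i j * if C j = k then x j else 0)) else 0 := fun k => by
      split <;> simp
    rw [Finset.sum_congr rfl fun k _ => h0 k, Finset.sum_ite_eq]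
    by_cases h : C i = C j
    · simp [h]
    · have : ¬ (C j = C i) := fun hh => h hh.symm
      simp [h, this]
  have h1 : x ⬝ᵥ (blockR C A) *ᵥ x
      = ∑ i, ∑ j, (if C i = C j then x i * (A i j * x j) else 0) := by
    simp only [dotProduct, mulVec, blockR, Matrix.of_apply, Finset.mul_sum]
    exact Finset.sum_congr rfl fun i _ => Finset.sum_congr rfl fun j _ => by
      split <;> ring
  have h2 : (∑ k, (fun j => if C j = k then x j else 0) ⬝ᵥ A *ᵥ
        (fun j => if C j = k then x j else 0))
      = ∑ i, ∑ j, (if C i = C j then x i * (A i j * x j) else 0) := by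
    have e1 : (∑ k, (fun j => if C j = k then x j else 0) ⬝ᵥ A *ᵥ
        (fun j => if C j = k then x j else 0))
        = ∑ k, ∑ i, ∑ j, (if C i = k then x i else 0) * (A i j * if C j = k then x j else 0) := by
      refine Finset.sum_congr rfl fun k _ => ?_
      simp only [dotProduct, mulVec, Finset.mul_sum]
    rw [e1, Finset.sum_comm]
    refine Finset.sum_congr rfl fun i _ => ?_
    rw [Finset.sum_comm]
    exact Finset.sum_congr rfl fun j _ => key i j
  rw [h1, h2]

lemma blockR_posDef {p K : ℕ} (C : Fin p → Fin K) {A : Matrix (Fin p) (Fin p) ℝ}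
    (hA : A.PosDef) : (blockR C A).PosDef := by
  classical
  refine posDef_iff_dotProduct_mulVec.mpr ⟨?_, ?_⟩
  · show (blockR C A)ᴴ = blockR C A
    ext i j
    have hsym : A j i = A i j := by
      have := congrFun (congrFun hA.1 i) j
      simpa using this
    simp only [conjTranspose_apply, blockR, Matrix.of_apply, star_trivial]
    by_cases h : C i = C j
    · rw [if_pos h.symm, if_pos h, hsym]
    · rw [if_neg (fun hh => h hh.symm), if_neg h]
  · intro x hx
    have hquad := blockR_quad C A x
    simp only [star_trivial] at *
    rw [hquad]
    obtain ⟨j0, hj0⟩ : ∃ j0, x j0 ≠ 0 := by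
      by_contra hc
      push_neg at hc
      exact hx (funext hc)
    refine Finset.sum_pos' (fun k _ => ?_) ⟨C j0, Finset.mem_univ _, ?_⟩
    · have := hA.posSemidef.dotProduct_mulVec_nonneg (fun j => if C j = k then x j else 0)
      simpa using this
    · have hne : (fun j => if C j = (C j0) then x j else 0) ≠ 0 := by
        intro hc
        have := congrFun hc j0
        simp at this
        exact hj0 this
      have := hA.dotProduct_mulVec_pos hne
      simpa using this

lemma blockR_inv_block {p K : ℕ} (C : Fin p → Fin K) {B : Matrix (Fin p) (Fin p) ℝ}
    (hB : IsUnit B.det) (hblock : ∀ i j, C i ≠ C j → B i j = 0) :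
    ∀ i j, C i ≠ C j → B⁻¹ i j = 0 := by
  classical
  intro i j hij
  set E : Matrix (Fin p) (Fin p) ℝ := Matrix.diagonal (fun l => if C l = C j then 1 else 0) with hE
  have hcomm : E * B = B * E := by
    ext a b
    simp only [hE, Matrix.diagonal_mul, Matrix.mul_diagonal]
    by_cases h : C a = C b
    · rw [h]; exact mul_comm _ _
    · rw [hblock a b h, mul_zero, zero_mul]
  have hcomm' : B⁻¹ * E = E * B⁻¹ := by
    calc B⁻¹ * E = B⁻¹ * E * (B * B⁻¹) := by rw [Matrix.mul_nonsing_inv _ hB, Matrix.mul_one]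
      _ = B⁻¹ * (E * B) * B⁻¹ := by noncomm_ring
      _ = B⁻¹ * (B * E) * B⁻¹ := by rw [hcomm]
      _ = (B⁻¹ * B) * (E * B⁻¹) := by noncomm_ring
      _ = E * B⁻¹ := by rw [Matrix.nonsing_inv_mul _ hB, Matrix.one_mul]
  have h2 := congrFun (congrFun hcomm' i) j
  rw [hE, Matrix.mul_diagonal, Matrix.diagonal_mul] at h2
  simpa [hij] using h2


set_option maxHeartbeats 1000000 in
/-- Sufficient condition for the HGL solution to be block diagonal: the partition of
`{1,…,p}` is encoded by `C : Fin p → Fin K` assigning each index to its block.  If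
`min{λ₁, λ₂/2} > |S_{jj'}|` for all `j, j'` in distinct blocks, then the minimizer of
the hub graphical lasso objective is block diagonal with these blocks. -/
theorem hgl_block_diagonal_sufficient {p K : ℕ} (l1 l2 l3 q : ℝ)
    (h1 : 0 ≤ l1) (h2 : 0 ≤ l2) (h3 : 0 ≤ l3) (hq : 1 ≤ q)
    (S : Matrix (Fin p) (Fin p) ℝ) (hS : S.IsSymm)
    (C : Fin p → Fin K)
    (hcond : ∀ j j' : Fin p, C j ≠ C j' → |S j j'| < min l1 (l2 / 2))
    (Θstar : Matrix (Fin p) (Fin p) ℝ) (hpos : Θstar.PosDef)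
    (hopt : ∀ Θ : Matrix (Fin p) (Fin p) ℝ, Θ.PosDef →
      -Real.log Θstar.det + (S * Θstar).trace + hubPenalty l1 l2 l3 q Θstar ≤
      -Real.log Θ.det + (S * Θ).trace + hubPenalty l1 l2 l3 q Θ) :
    ∀ j j' : Fin p, C j ≠ C j' → Θstar j j' = 0 := by
  classical
  by_contra hcon
  push_neg at hcon
  obtain ⟨a, b, hab, hΘab⟩ := hcon
  set m := min l1 (l2 / 2) with hm
  have hm0 : 0 ≤ m := le_min h1 (by linarith)
  set Bm := blockR C Θstar with hBm
  have hBpos : Bm.PosDef := blockR_posDef C hpos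
  have hBunit : IsUnit Bm.det := hBpos.det_pos.ne'.isUnit
  have hΘsym : ∀ i j, Θstar j i = Θstar i j := by
    intro i j
    have := congrFun (congrFun hpos.1 i) j
    simpa using this
  set T := ∑ i, ∑ j, (if C i = C j then 0 else |Θstar i j|) with hT
  -- T is positive
  have hTpos : 0 < T := by
    rw [hT]
    refine Finset.sum_pos' (fun i _ => Finset.sum_nonneg fun j _ => by positivity)
      ⟨a, Finset.mem_univ _, Finset.sum_pos' (fun j _ => by positivity)
        ⟨b, Finset.mem_univ _, ?_⟩⟩
    rw [if_neg hab]
    exact abs_pos.mpr hΘab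
  -- log det comparison
  have hblockBm : ∀ i j, C i ≠ C j → Bm i j = 0 := by
    intro i j h; simp [hBm, blockR, h]
  set Mm : Matrix (Fin p) (Fin p) ℝ := Matrix.of (fun i j => if C i = C j then 0 else Θstar i j)
    with hMm
  have hdecom : Θstar = Bm + Mm := by
    ext i j
    simp only [Matrix.add_apply, hBm, hMm, blockR, Matrix.of_apply]
    split <;> ring
  have htrinv : (Bm⁻¹ * Θstar).trace = (p : ℝ) := by
    have e : Bm⁻¹ * Θstar = Bm⁻¹ * Bm + Bm⁻¹ * Mm := by
      rw [← Matrix.mul_add, ← hdecom]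
    have e2 : (Bm⁻¹ * Mm).trace = 0 := by
      rw [Matrix.trace]
      refine Finset.sum_eq_zero fun i _ => ?_
      rw [Matrix.diag_apply, Matrix.mul_apply]
      refine Finset.sum_eq_zero fun j _ => ?_
      by_cases h : C j = C i
      · have : Mm j i = 0 := by simp [hMm, h]
        rw [this, mul_zero]
      · rw [blockR_inv_block C hBunit hblockBm i j (fun hh => h hh.symm), zero_mul]
    rw [e, Matrix.trace_add, Matrix.nonsing_inv_mul _ hBunit, e2, Matrix.trace_one]
    simp
  have hlog : Real.log Θstar.det ≤ Real.log Bm.det := by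
    have hconc := logdet_concavity hBpos hpos
    rw [htrinv] at hconc
    linarith
  -- trace comparison (strict)
  have htr : (S * Bm).trace < (S * Θstar).trace + m * T := by
    have expand : ∀ (M : Matrix (Fin p) (Fin p) ℝ),
        (S * M).trace = ∑ i, ∑ j, S i j * M j i := by
      intro M
      rw [Matrix.trace]
      exact Finset.sum_congr rfl fun i _ => by rw [Matrix.diag_apply, Matrix.mul_apply]
    set D := ∑ i, ∑ j, S i j * (if C j = C i then 0 else Θstar j i) with hD
    have hsplit : (S * Bm).trace = (S * Θstar).trace - D := by
      rw [expand, expand, hD, ← Finset.sum_sub_distrib]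
      refine Finset.sum_congr rfl fun i _ => ?_
      rw [← Finset.sum_sub_distrib]
      refine Finset.sum_congr rfl fun j _ => ?_
      simp only [hBm, blockR, Matrix.of_apply]
      split <;> ring
    have habs : |D| < m * T := by
      have hb1 : |D| ≤ ∑ i, ∑ j, |S i j * (if C j = C i then 0 else Θstar j i)| := by
        refine (Finset.abs_sum_le_sum_abs _ _).trans ?_
        exact Finset.sum_le_sum fun i _ => Finset.abs_sum_le_sum_abs _ _
      have hswap : (∑ i, ∑ j, (if C j = C i then 0 else |Θstar j i|)) = T := by
        rw [Finset.sum_comm]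
      have hb2 : (∑ i, ∑ j, |S i j * (if C j = C i then 0 else Θstar j i)|)
          < ∑ i, ∑ j, m * (if C j = C i then 0 else |Θstar j i|) := by
        rw [← Finset.sum_product', ← Finset.sum_product']
        refine Finset.sum_lt_sum (fun x _ => ?_) ⟨(b, a), Finset.mem_univ _, ?_⟩
        · obtain ⟨i, j⟩ := x
          by_cases h : C j = C i
          · simp [h]
          · rw [if_neg h, if_neg h, abs_mul]
            exact mul_le_mul_of_nonneg_right
              (le_of_lt (hcond i j (fun hh => h hh.symm))) (abs_nonneg _)
        · rw [if_neg hab, if_neg hab, abs_mul]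
          exact mul_lt_mul_of_pos_right (hcond b a (Ne.symm hab)) (abs_pos.mpr hΘab)
      have hb3 : (∑ i, ∑ j, m * (if C j = C i then 0 else |Θstar j i|)) = m * T := by
        rw [← hswap, Finset.mul_sum]
        exact Finset.sum_congr rfl fun i _ => by rw [Finset.mul_sum]
      linarith
    have := neg_abs_le D
    rw [hsplit]
    linarith
  -- penalty comparison
  have hpen : hubPenalty l1 l2 l3 q Bm + m * T ≤ hubPenalty l1 l2 l3 q Θstar := by
    have hΘisSymm : Θstar.IsSymm := by
      ext i j
      rw [Matrix.transpose_apply]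
      exact hΘsym i j
    have hne : ({c : ℝ | ∃ V Z : Matrix (Fin p) (Fin p) ℝ, Z.IsSymm ∧ Θstar = V + Vᵀ + Z ∧
        c = l1 * (∑ i, ∑ j, |offd Z i j|) + l2 * (∑ i, ∑ j, |offd V i j|) +
            l3 * ∑ j, (∑ i, |offd V i j| ^ q) ^ (1 / q)}).Nonempty :=
      ⟨_, 0, Θstar, hΘisSymm, by simp, rfl⟩
    unfold hubPenalty
    refine le_csInf hne ?_
    rintro c ⟨V, Z, hZ, hdec, rfl⟩
    have hdecE : ∀ i j, Θstar i j = V i j + V j i + Z i j := by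
      intro i j
      rw [hdec]
      simp [Matrix.add_apply, Matrix.transpose_apply]
    set Vt := blockR C V with hVt
    set Zt := blockR C Z with hZt
    have hZtsym : Zt.IsSymm := by
      ext i j
      have hz : Z j i = Z i j := by
        have := congrFun (congrFun hZ i) j
        rwa [Matrix.transpose_apply] at this
      simp only [Matrix.transpose_apply, hZt, blockR, Matrix.of_apply]
      by_cases h : C i = C j
      · rw [if_pos h.symm, if_pos h, hz]
      · rw [if_neg (fun hh => h hh.symm), if_neg h]
    have hdecB : Bm = Vt + Vtᵀ + Zt := by
      ext i j
      simp only [Matrix.add_apply, Matrix.transpose_apply, hBm, hVt, hZt, blockR,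
        Matrix.of_apply]
      by_cases h : C i = C j
      · rw [if_pos h, if_pos h, if_pos h.symm, if_pos h, hdecE]
      · rw [if_neg h, if_neg h, if_neg (fun hh => h hh.symm), if_neg h]
        ring
    set Sz := ∑ i, ∑ j, |offd Z i j| with hSz
    set Sv := ∑ i, ∑ j, |offd V i j| with hSv
    set Lv := ∑ j, (∑ i, |offd V i j| ^ q) ^ (1 / q) with hLv
    set Tz := ∑ i, ∑ j, (if C i = C j then 0 else |Z i j|) with hTz
    set Tv := ∑ i, ∑ j, (if C i = C j then 0 else |V i j|) with hTvdef
    have hTz0 : 0 ≤ Tz := by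
      rw [hTz]
      refine Finset.sum_nonneg fun i _ => Finset.sum_nonneg fun j _ => by positivity
    have hTv0 : 0 ≤ Tv := by
      rw [hTvdef]
      refine Finset.sum_nonneg fun i _ => Finset.sum_nonneg fun j _ => by positivity
    have hsumZ : (∑ i, ∑ j, |offd Zt i j|) = Sz - Tz := by
      rw [hSz, hTz, ← Finset.sum_sub_distrib]
      refine Finset.sum_congr rfl fun i _ => ?_
      rw [← Finset.sum_sub_distrib]
      refine Finset.sum_congr rfl fun j _ => ?_
      rw [offd_apply, offd_apply]
      simp only [hZt, blockR, Matrix.of_apply]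
      by_cases hij : i = j
      · subst hij; simp
      · rw [if_neg hij, if_neg hij]
        by_cases h : C i = C j
        · rw [if_pos h, if_pos h]; ring
        · rw [if_neg h, if_neg h]; simp
    have hsumV : (∑ i, ∑ j, |offd Vt i j|) = Sv - Tv := by
      rw [hSv, hTvdef, ← Finset.sum_sub_distrib]
      refine Finset.sum_congr rfl fun i _ => ?_
      rw [← Finset.sum_sub_distrib]
      refine Finset.sum_congr rfl fun j _ => ?_
      rw [offd_apply, offd_apply]
      simp only [hVt, blockR, Matrix.of_apply]
      by_cases hij : i = j
      · subst hij; simp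
      · rw [if_neg hij, if_neg hij]
        by_cases h : C i = C j
        · rw [if_pos h, if_pos h]; ring
        · rw [if_neg h, if_neg h]; simp
    have hLle : (∑ j, (∑ i, |offd Vt i j| ^ q) ^ (1 / q)) ≤ Lv := by
      rw [hLv]
      refine Finset.sum_le_sum fun j _ => ?_
      refine Real.rpow_le_rpow (by positivity) ?_ (by positivity)
      refine Finset.sum_le_sum fun i _ => ?_
      refine Real.rpow_le_rpow (abs_nonneg _) ?_ (by linarith)
      rw [offd_apply, offd_apply]
      by_cases hij : i = j
      · simp [hij]
      · rw [if_neg hij, if_neg hij]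
        simp only [hVt, blockR, Matrix.of_apply]
        split
        · exact le_refl _
        · simp [abs_nonneg]
    -- T ≤ Tz + Tv + Tv
    have hTv' : (∑ i, ∑ j, (if C i = C j then 0 else |V j i|)) = Tv := by
      rw [Finset.sum_comm, hTvdef]
      refine Finset.sum_congr rfl fun i _ => Finset.sum_congr rfl fun j _ => ?_
      by_cases h : C i = C j
      · rw [if_pos h, if_pos h.symm]
      · rw [if_neg h, if_neg (fun hh => h hh.symm)]
    have hTle : T ≤ Tz + Tv + Tv := by
      have : T ≤ Tz + Tv + (∑ i, ∑ j, (if C i = C j then 0 else |V j i|)) := by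
        rw [hT, hTz, hTvdef, ← Finset.sum_add_distrib, ← Finset.sum_add_distrib]
        refine Finset.sum_le_sum fun i _ => ?_
        rw [← Finset.sum_add_distrib, ← Finset.sum_add_distrib]
        refine Finset.sum_le_sum fun j _ => ?_
        by_cases h : C i = C j
        · simp [h]
        · rw [if_neg h, if_neg h, if_neg h, if_neg h]
          calc |Θstar i j| = |V i j + V j i + Z i j| := by rw [hdecE]
            _ ≤ |V i j + V j i| + |Z i j| := abs_add_le _ _
            _ ≤ |V i j| + |V j i| + |Z i j| := by
                have := abs_add_le (V i j) (V j i)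
                linarith
            _ = |Z i j| + |V i j| + |V j i| := by ring
      rwa [hTv'] at this
    have hmT : m * T ≤ l1 * Tz + l2 * Tv := by
      have e1 : m * T ≤ m * (Tz + Tv + Tv) := mul_le_mul_of_nonneg_left hTle hm0
      have e2 : m * Tz ≤ l1 * Tz :=
        mul_le_mul_of_nonneg_right (min_le_left _ _) hTz0
      have e3 : (2 * m) * Tv ≤ l2 * Tv := by
        have : 2 * m ≤ l2 := by
          have := min_le_right l1 (l2 / 2)
          rw [← hm] at this
          linarith
        exact mul_le_mul_of_nonneg_right this hTv0
      linarith
    have hmem : (l1 * (∑ i, ∑ j, |offd Zt i j|) + l2 * (∑ i, ∑ j, |offd Vt i j|) +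
          l3 * ∑ j, (∑ i, |offd Vt i j| ^ q) ^ (1 / q)) ∈
        {c : ℝ | ∃ V' Z' : Matrix (Fin p) (Fin p) ℝ, Z'.IsSymm ∧ Bm = V' + V'ᵀ + Z' ∧
          c = l1 * (∑ i, ∑ j, |offd Z' i j|) + l2 * (∑ i, ∑ j, |offd V' i j|) +
              l3 * ∑ j, (∑ i, |offd V' i j| ^ q) ^ (1 / q)} :=
      ⟨Vt, Zt, hZtsym, hdecB, rfl⟩
    have hinf_le := csInf_le (pen_bddBelow l1 l2 l3 q h1 h2 h3 Bm) hmem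
    rw [hsumZ, hsumV] at hinf_le
    have hl3 : l3 * (∑ j, (∑ i, |offd Vt i j| ^ q) ^ (1 / q)) ≤ l3 * Lv :=
      mul_le_mul_of_nonneg_left hLle h3
    linarith [hinf_le, hl3, hmT]
  -- combine
  have hfin := hopt Bm hBpos
  linarith
end

section
/- (Lemma 1: sufficient condition for Z diagonal) If λ₁ > (λ₂+λ₃)/2, then at any optimal solution (Θ*, V*, Z*) of the hub graphical lasso with q ≥ 1, the matrix Z* is diagonal. -/
open Matrix BigOperators

/-- The hub graphical lasso objective, as a function of a decomposition `(Θ, V, Z)`. -/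
noncomputable def hglObj {p : ℕ} (l1 l2 l3 q : ℝ) (S : Matrix (Fin p) (Fin p) ℝ)
    (Θ V Z : Matrix (Fin p) (Fin p) ℝ) : ℝ :=
  -Real.log Θ.det + (S * Θ).trace +
    l1 * (∑ i, ∑ j, |offd Z i j|) + l2 * (∑ i, ∑ j, |offd V i j|) +
    l3 * ∑ j, (∑ i, |offd V i j| ^ q) ^ (1 / q)

lemma my_add_rpow_le {q : ℝ} (hq : 1 ≤ q) {a b : ℝ} (ha : 0 ≤ a) (hb : 0 ≤ b) :
    a ^ q + b ^ q ≤ (a + b) ^ q := by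
  have := NNReal.add_rpow_le_rpow_add ⟨a, ha⟩ ⟨b, hb⟩ hq
  have h := NNReal.coe_le_coe.2 this
  push_cast at h
  convert h using 2 <;> rfl

lemma my_sum_rpow_le {ι : Type*} (s : Finset ι) (f : ι → ℝ) (hf : ∀ i, 0 ≤ f i)
    {q : ℝ} (hq : 1 ≤ q) : (∑ i ∈ s, f i ^ q) ^ (1 / q) ≤ ∑ i ∈ s, f i := by
  have hq0 : q ≠ 0 := by positivity
  have h1 : ∑ i ∈ s, f i ^ q ≤ (∑ i ∈ s, f i) ^ q := by
    induction s using Finset.cons_induction with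
    | empty => simp [Real.zero_rpow hq0]
    | cons a s ha ih =>
      rw [Finset.sum_cons, Finset.sum_cons]
      calc f a ^ q + ∑ i ∈ s, f i ^ q ≤ f a ^ q + (∑ i ∈ s, f i) ^ q := by linarith
        _ ≤ (f a + ∑ i ∈ s, f i) ^ q :=
          my_add_rpow_le hq (hf a) (Finset.sum_nonneg fun i _ => hf i)
  calc (∑ i ∈ s, f i ^ q) ^ (1 / q) ≤ ((∑ i ∈ s, f i) ^ q) ^ (1 / q) := by
        apply Real.rpow_le_rpow (Finset.sum_nonneg fun i _ => Real.rpow_nonneg (hf i) q) h1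
        positivity
    _ = ∑ i ∈ s, f i := by
        rw [one_div, Real.rpow_rpow_inv (Finset.sum_nonneg fun i _ => hf i) hq0]

/-- Lemma 1: if `λ₁ > (λ₂+λ₃)/2`, then at any optimal solution `(Θ*, V*, Z*)` of the
hub graphical lasso with `q ≥ 1`, the matrix `Z*` is diagonal. -/
theorem hgl_Z_diagonal {p : ℕ} (l1 l2 l3 q : ℝ)
    (h2 : 0 ≤ l2) (h3 : 0 ≤ l3) (hq : 1 ≤ q)
    (hl : l1 > (l2 + l3) / 2)
    (S : Matrix (Fin p) (Fin p) ℝ) (hS : S.IsSymm)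
    (Θs Vs Zs : Matrix (Fin p) (Fin p) ℝ)
    (hpos : Θs.PosDef) (hZsym : Zs.IsSymm) (hdecomp : Θs = Zs + Vs + Vsᵀ)
    (hopt : ∀ Θ V Z : Matrix (Fin p) (Fin p) ℝ, Θ.PosDef → Z.IsSymm →
      Θ = Z + V + Vᵀ → hglObj l1 l2 l3 q S Θs Vs Zs ≤ hglObj l1 l2 l3 q S Θ V Z) :
    ∀ i j : Fin p, i ≠ j → Zs i j = 0 := by
  set D : Matrix (Fin p) (Fin p) ℝ := Matrix.diagonal (fun i => Zs i i) with hD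
  set V' : Matrix (Fin p) (Fin p) ℝ := Vs + (1/2 : ℝ) • offd Zs with hV'
  have hZ : ∀ i j, Zs j i = Zs i j := fun i j => hZsym.apply i j
  have hDsym : D.IsSymm := Matrix.isSymm_diagonal _
  have hdecomp' : Θs = D + V' + V'ᵀ := by
    rw [hdecomp]
    ext i j
    simp only [hV', hD, Matrix.add_apply, Matrix.transpose_apply, Matrix.smul_apply,
      Matrix.diagonal_apply, offd_apply, smul_eq_mul]
    rcases eq_or_ne i j with h | h
    · subst h; simp
    · simp only [if_neg h, if_neg (Ne.symm h)]
      rw [hZ]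
      ring
  have key := hopt Θs V' D hpos hDsym hdecomp'
  -- abbreviations
  set A := ∑ i, ∑ j, |offd Zs i j| with hA
  set B := ∑ i, ∑ j, |offd Vs i j| with hB
  set C := ∑ j, (∑ i, |offd Vs i j| ^ q) ^ (1/q) with hC
  have hoffdV' : ∀ i j, offd V' i j = offd Vs i j + (1/2) * offd Zs i j := by
    intro i j
    simp only [hV', offd_apply, Matrix.add_apply, Matrix.smul_apply, smul_eq_mul]
    rcases eq_or_ne i j with h | h
    · simp [h]
    · simp [h]
  have hoffdD : ∀ i j, offd D i j = 0 := by
    intro i j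
    simp only [offd_apply, hD, Matrix.diagonal_apply]
    rcases eq_or_ne i j with h | h <;> simp [h]
  have hAnn : 0 ≤ A := Finset.sum_nonneg fun i _ =>
    Finset.sum_nonneg fun j _ => abs_nonneg _
  -- bound on the ℓ1 term of V'
  have hB' : ∑ i, ∑ j, |offd V' i j| ≤ B + (1/2) * A := by
    have : ∀ i j : Fin p, |offd V' i j| ≤ |offd Vs i j| + (1/2) * |offd Zs i j| := by
      intro i j
      rw [hoffdV']
      calc |offd Vs i j + 1/2 * offd Zs i j| ≤ |offd Vs i j| + |1/2 * offd Zs i j| :=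
            abs_add_le _ _
        _ = |offd Vs i j| + (1/2) * |offd Zs i j| := by rw [abs_mul]; norm_num
    calc ∑ i, ∑ j, |offd V' i j|
        ≤ ∑ i, ∑ j, (|offd Vs i j| + (1/2) * |offd Zs i j|) :=
          Finset.sum_le_sum fun i _ => Finset.sum_le_sum fun j _ => this i j
      _ = B + (1/2) * A := by
          rw [hB, hA]; simp [Finset.sum_add_distrib, Finset.mul_sum]
  -- bound on the group-lasso term of V'
  have hC' : ∑ j, (∑ i, |offd V' i j| ^ q) ^ (1/q) ≤ C + (1/2) * A := by
    have hAswap : A = ∑ j, ∑ i, |offd Zs i j| := by rw [hA]; exact Finset.sum_comm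
    have hcol : ∀ j : Fin p, (∑ i, |offd V' i j| ^ q) ^ (1/q) ≤
        (∑ i, |offd Vs i j| ^ q) ^ (1/q) + ∑ i, (1/2) * |offd Zs i j| := by
      intro j
      have h1 : (∑ i, |offd V' i j| ^ q) ^ (1/q) ≤
          (∑ i, |offd Vs i j| ^ q) ^ (1/q) + (∑ i, |(1/2) * offd Zs i j| ^ q) ^ (1/q) := by
        have := Real.Lp_add_le (Finset.univ : Finset (Fin p))
          (fun i => offd Vs i j) (fun i => (1/2) * offd Zs i j) hq
        simpa only [hoffdV'] using this
      have h2 : (∑ i, |(1/2) * offd Zs i j| ^ q) ^ (1/q) ≤ ∑ i, (1/2) * |offd Zs i j| := by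
        have := my_sum_rpow_le (Finset.univ : Finset (Fin p))
          (fun i => |(1/2) * offd Zs i j|) (fun i => abs_nonneg _) hq
        calc (∑ i, |(1/2) * offd Zs i j| ^ q) ^ (1/q) ≤ ∑ i, |(1/2) * offd Zs i j| := this
          _ = ∑ i, (1/2) * |offd Zs i j| := by
            apply Finset.sum_congr rfl; intro i _; rw [abs_mul]; norm_num
      linarith
    calc ∑ j, (∑ i, |offd V' i j| ^ q) ^ (1/q)
        ≤ ∑ j, ((∑ i, |offd Vs i j| ^ q) ^ (1/q) + ∑ i, (1/2) * |offd Zs i j|) :=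
          Finset.sum_le_sum fun j _ => hcol j
      _ = C + (1/2) * A := by
          rw [hC, hAswap, Finset.sum_add_distrib, Finset.mul_sum]
          congr 1
          simp [Finset.mul_sum]
  -- unfold the optimality inequality
  have hDzero : (∑ i, ∑ j, |offd D i j|) = 0 := by
    apply Finset.sum_eq_zero; intro i _; apply Finset.sum_eq_zero; intro j _
    rw [hoffdD]; simp
  have key2 : l1 * A + l2 * B + l3 * C ≤
      l2 * (∑ i, ∑ j, |offd V' i j|) + l3 * (∑ j, (∑ i, |offd V' i j| ^ q) ^ (1/q)) := by
    have := key
    simp only [hglObj, hDzero, mul_zero] at this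
    rw [← hA, ← hB, ← hC] at this
    linarith
  have hBV'nn : l2 * (∑ i, ∑ j, |offd V' i j|) ≤ l2 * (B + (1/2) * A) :=
    mul_le_mul_of_nonneg_left hB' h2
  have hCV'nn : l3 * (∑ j, (∑ i, |offd V' i j| ^ q) ^ (1/q)) ≤ l3 * (C + (1/2) * A) :=
    mul_le_mul_of_nonneg_left hC' h3
  have hAzero : A = 0 := by nlinarith
  -- conclude entrywise
  intro i j hij
  have h0 : ∀ i ∈ (Finset.univ : Finset (Fin p)),
      (0:ℝ) ≤ ∑ j, |offd Zs i j| :=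
    fun i _ => Finset.sum_nonneg fun j _ => abs_nonneg _
  have hrow : ∑ j', |offd Zs i j'| = 0 :=
    (Finset.sum_eq_zero_iff_of_nonneg h0).1 hAzero.symm.symm i (Finset.mem_univ i)
  have hentry : |offd Zs i j| = 0 :=
    (Finset.sum_eq_zero_iff_of_nonneg (fun j _ => abs_nonneg _)).1 hrow j (Finset.mem_univ j)
  have := abs_eq_zero.1 hentry
  rwa [offd_apply, if_neg hij] at this
end
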